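/- arXiv:1204.1740 — 2 statements merged into one kernel-verified Lean document; each statement's English description precedes it below -/
import Mathlib

section
/- Let T > 0, let U ⊂ ℝ^r be a convex compact set, let C > 0, and let 𝒦 be the set of C-Lipschitz functions u : [0,T] → U. Let φ : ℝ^n × ℝ^r → ℝ^n be globally Lipschitz and let f : ℝ^n × ℝ^r → ℝ be continuous. For each u ∈ 𝒦 let x_u : [0,T] → ℝ^n be the unique continuous solution of the integral equation x_u(t) = x₀ + ∫₀ᵗ φ(x_u(τ), u(τ)) dτ. Then for every t ∈ [0,T] the set D(t) = { (x_u(t), ∫₀ᵗ f(x_u(τ), u(τ)) dτ, u(t)) : u ∈ 𝒦 } is a compact (closed and bounded) subset of ℝ^n × ℝ × ℝ^r. -/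
open MeasureTheory Set

section AuxGronwall

variable {E : Type*} [NormedAddCommGroup E] [NormedSpace ℝ E] [CompleteSpace E]

private lemma aux_deriv {T : ℝ} {g y : ℝ → E} {x₀ : E} (hg : ContinuousOn g (Icc 0 T))
    (hy : ∀ s ∈ Icc 0 T, y s = x₀ + ∫ τ in (0:ℝ)..s, g τ) {t : ℝ} (ht : t ∈ Ico 0 T) :
    HasDerivWithinAt y (g t) (Ici t) t := by
  have htmem : t ∈ Icc 0 T := Ico_subset_Icc_self ht
  haveI : Fact (t ∈ Icc (0:ℝ) T) := ⟨htmem⟩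
  have hint : IntervalIntegrable g volume 0 t := by
    apply ContinuousOn.intervalIntegrable
    apply hg.mono
    rw [uIcc_of_le ht.1]
    exact Icc_subset_Icc le_rfl htmem.2
  have hmeas : StronglyMeasurableAtFilter g (nhdsWithin t (Icc 0 T)) :=
    hg.stronglyMeasurableAtFilter_nhdsWithin measurableSet_Icc t
  have h1 : HasDerivWithinAt (fun s => ∫ τ in (0:ℝ)..s, g τ) (g t) (Icc 0 T) t :=
    intervalIntegral.integral_hasDerivWithinAt_right hint hmeas (hg t htmem)
  have h2 : HasDerivWithinAt (fun s => x₀ + ∫ τ in (0:ℝ)..s, g τ) (g t) (Icc 0 T) t :=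
    h1.const_add x₀
  have h3 : HasDerivWithinAt y (g t) (Icc 0 T) t :=
    h2.congr (fun s hs => hy s hs) (hy t htmem)
  have h4 : HasDerivWithinAt y (g t) (Ici t ∩ Iio T) t := by
    apply h3.mono
    intro s hs
    exact ⟨le_trans ht.1 hs.1, le_of_lt hs.2⟩
  exact (hasDerivWithinAt_inter (Iio_mem_nhds ht.2)).mp h4

private lemma aux_gronwall {T : ℝ} {y₁ y₂ g₁ g₂ : ℝ → E} {x₀ : E} {K ε : ℝ}
    (hg₁ : ContinuousOn g₁ (Icc 0 T)) (hg₂ : ContinuousOn g₂ (Icc 0 T))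
    (hy₁c : ContinuousOn y₁ (Icc 0 T)) (hy₂c : ContinuousOn y₂ (Icc 0 T))
    (he₁ : ∀ s ∈ Icc 0 T, y₁ s = x₀ + ∫ τ in (0:ℝ)..s, g₁ τ)
    (he₂ : ∀ s ∈ Icc 0 T, y₂ s = x₀ + ∫ τ in (0:ℝ)..s, g₂ τ)
    (hbound : ∀ s ∈ Ico 0 T, ‖g₁ s - g₂ s‖ ≤ K * ‖y₁ s - y₂ s‖ + ε)
    (hT : 0 ≤ T) :
    ∀ t ∈ Icc 0 T, ‖y₁ t - y₂ t‖ ≤ gronwallBound 0 K ε (t - 0) := by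
  have h0 : (0:ℝ) ∈ Icc (0:ℝ) T := ⟨le_rfl, hT⟩
  apply norm_le_gronwallBound_of_norm_deriv_right_le (f' := fun s => g₁ s - g₂ s)
  · exact hy₁c.sub hy₂c
  · intro s hs
    exact (aux_deriv hg₁ he₁ hs).sub (aux_deriv hg₂ he₂ hs)
  · have : y₁ 0 = y₂ 0 := by
      rw [he₁ 0 h0, he₂ 0 h0, intervalIntegral.integral_same, intervalIntegral.integral_same]
    simp [this]
  · exact hbound

private lemma aux_gb_mono {K ε x x' : ℝ} (hε : 0 ≤ ε) (hK : 0 ≤ K) (h : x ≤ x') :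
    gronwallBound 0 K ε x ≤ gronwallBound 0 K ε x' := by
  rcases eq_or_lt_of_le hK with hK0 | hKpos
  · subst hK0
    simp only [gronwallBound_K0]
    nlinarith
  · simp only [gronwallBound, if_neg (ne_of_gt hKpos)]
    have h1 : Real.exp (K * x) ≤ Real.exp (K * x') :=
      Real.exp_le_exp.mpr (by nlinarith)
    have h2 : 0 ≤ ε / K := div_nonneg hε hK
    nlinarith

private lemma aux_gb_smul (K ε c x : ℝ) :
    gronwallBound 0 K (c * ε) x = c * gronwallBound 0 K ε x := by
  by_cases h : K = 0
  · simp only [gronwallBound, if_pos h]; ring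
  · simp only [gronwallBound, if_neg h]; ring

private lemma aux_gb_nonneg {K ε x : ℝ} (hε : 0 ≤ ε) (hK : 0 ≤ K) (hx : 0 ≤ x) :
    0 ≤ gronwallBound 0 K ε x := by
  have := aux_gb_mono hε hK hx
  rwa [gronwallBound_x0] at this

end AuxGronwall

set_option maxHeartbeats 1000000 in
/-- For a control system with Lipschitz right-hand side, continuous cost
integrand, and admissible controls the `C`-Lipschitz functions `u : [0,T] → U` (with `U`
convex compact), the set
`D(t) = {(x_u(t), ∫₀ᵗ f(x_u(τ), u(τ)) dτ, u(t)) : u ∈ 𝒦}` is compact for each `t ∈ [0,T]`. -/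
theorem statement0 {n r : ℕ} (T : ℝ) (hT : 0 < T)
    (U : Set (EuclideanSpace ℝ (Fin r))) (hUconv : Convex ℝ U) (hUcomp : IsCompact U)
    (C : ℝ) (hC : 0 < C)
    (φ : EuclideanSpace ℝ (Fin n) → EuclideanSpace ℝ (Fin r) → EuclideanSpace ℝ (Fin n))
    (L : NNReal) (hφ : LipschitzWith L (Function.uncurry φ))
    (f : EuclideanSpace ℝ (Fin n) → EuclideanSpace ℝ (Fin r) → ℝ)
    (hf : Continuous (Function.uncurry f))
    (x₀ : EuclideanSpace ℝ (Fin n))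
    (𝒦 : Set (ℝ → EuclideanSpace ℝ (Fin r)))
    (h𝒦 : 𝒦 = {u | LipschitzOnWith (Real.toNNReal C) u (Icc 0 T) ∧ ∀ t ∈ Icc 0 T, u t ∈ U})
    (x : (ℝ → EuclideanSpace ℝ (Fin r)) → ℝ → EuclideanSpace ℝ (Fin n))
    (hxsol : ∀ u ∈ 𝒦, ContinuousOn (x u) (Icc 0 T) ∧
      ∀ t ∈ Icc 0 T, x u t = x₀ + ∫ τ in (0:ℝ)..t, φ (x u τ) (u τ))
    (hxuniq : ∀ u ∈ 𝒦, ∀ y : ℝ → EuclideanSpace ℝ (Fin n), ContinuousOn y (Icc 0 T) →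
      (∀ t ∈ Icc 0 T, y t = x₀ + ∫ τ in (0:ℝ)..t, φ (y τ) (u τ)) →
      ∀ t ∈ Icc 0 T, y t = x u t) :
    ∀ t ∈ Icc 0 T,
      IsCompact {p : EuclideanSpace ℝ (Fin n) × ℝ × EuclideanSpace ℝ (Fin r) |
        ∃ u ∈ 𝒦, p = (x u t, ∫ τ in (0:ℝ)..t, f (x u τ) (u τ), u t)} := by
  intro t ht
  rcases U.eq_empty_or_nonempty with hUe | hUne
  · -- `U` empty: the set of admissible controls is empty, hence so is `D(t)`.
    convert isCompact_empty
    rw [eq_empty_iff_forall_notMem]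
    rintro p ⟨u, hu, -⟩
    rw [h𝒦] at hu
    have := hu.2 0 ⟨le_rfl, hT.le⟩
    rw [hUe] at this
    exact this
  haveI : CompactSpace (Icc (0:ℝ) T) := isCompact_iff_compactSpace.mp isCompact_Icc
  -- the retraction onto `[0,T]` and extension of controls defined on `[0,T]` to `ℝ`
  set proj : ℝ → ℝ := fun s => max 0 (min s T) with hprojdef
  have hproj : ∀ s, proj s ∈ Icc (0:ℝ) T :=
    fun s => ⟨le_max_left _ _, max_le hT.le (min_le_right _ _)⟩
  have hprojeq : ∀ s ∈ Icc (0:ℝ) T, proj s = s := by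
    intro s hs
    simp only [hprojdef, min_eq_left hs.2, max_eq_right hs.1]
  set ex : (BoundedContinuousFunction (↥(Icc (0:ℝ) T)) (EuclideanSpace ℝ (Fin r))) → ℝ → EuclideanSpace ℝ (Fin r) := fun ub s => ub ⟨proj s, hproj s⟩ with hexdef
  set Kb : Set (BoundedContinuousFunction (↥(Icc (0:ℝ) T)) (EuclideanSpace ℝ (Fin r))) :=
    {ub | (∀ a b : Icc (0:ℝ) T, dist (ub a) (ub b) ≤ C * dist a b) ∧ ∀ s, ub s ∈ U} with hKbdef
  have hexK : ∀ ub ∈ Kb, ex ub ∈ 𝒦 := by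
    intro ub hub
    rw [h𝒦]
    constructor
    · apply LipschitzOnWith.of_dist_le_mul
      intro a ha b hb
      have h1 : ex ub a = ub ⟨a, ha⟩ := by
        show ub ⟨proj a, hproj a⟩ = ub ⟨a, ha⟩
        exact congrArg ub (Subtype.ext (hprojeq a ha))
      have h2 : ex ub b = ub ⟨b, hb⟩ := by
        show ub ⟨proj b, hproj b⟩ = ub ⟨b, hb⟩
        exact congrArg ub (Subtype.ext (hprojeq b hb))
      rw [h1, h2, Real.coe_toNNReal C hC.le]
      have := hub.1 ⟨a, ha⟩ ⟨b, hb⟩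
      rwa [Subtype.dist_eq] at this
    · intro s hs
      exact hub.2 _
  have hex_eq : ∀ ub, ∀ s ∈ Icc (0:ℝ) T, ∀ (hs : s ∈ Icc (0:ℝ) T), ex ub s = ub ⟨s, hs⟩ := by
    intro ub s hs hs'
    exact congrArg ub (Subtype.ext (hprojeq s hs))
  -- basic continuity facts
  have hucont : ∀ u ∈ 𝒦, ContinuousOn u (Icc 0 T) := by
    intro u hu
    rw [h𝒦] at hu
    exact hu.1.continuousOn
  have hGcont : ∀ u ∈ 𝒦, ContinuousOn (fun s => φ (x u s) (u s)) (Icc 0 T) := by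
    intro u hu
    exact hφ.continuous.comp_continuousOn ((hxsol u hu).1.prodMk (hucont u hu))
  -- a bound for `φ x₀` on `U`
  obtain ⟨w₀, hw₀U, hw₀⟩ := hUcomp.exists_isMaxOn hUne
    (continuous_norm.comp (hφ.continuous.comp (Continuous.prodMk_right x₀))).continuousOn
  set M : ℝ := ‖φ x₀ w₀‖ with hMdef
  have hM : ∀ w ∈ U, ‖φ x₀ w‖ ≤ M := fun w hw => hw₀ hw
  have hM0 : 0 ≤ M := norm_nonneg _
  set R : ℝ := gronwallBound 0 (L:ℝ) M T with hRdef
  set B₁ : ℝ := gronwallBound 0 (L:ℝ) (L:ℝ) T with hB₁def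
  have hB₁0 : 0 ≤ B₁ := aux_gb_nonneg L.coe_nonneg L.coe_nonneg hT.le
  -- a priori bound on trajectories
  have hball : ∀ u ∈ 𝒦, ∀ s ∈ Icc (0:ℝ) T, ‖x u s - x₀‖ ≤ R := by
    intro u hu s hs
    have hu' := hu; rw [h𝒦] at hu'
    have hb : ∀ τ ∈ Ico (0:ℝ) T, ‖φ (x u τ) (u τ) - (0:EuclideanSpace ℝ (Fin n))‖ ≤
        (L:ℝ) * ‖x u τ - x₀‖ + M := by
      intro τ hτ
      have hτ' : τ ∈ Icc (0:ℝ) T := Ico_subset_Icc_self hτ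
      rw [sub_zero]
      have hlip := hφ.dist_le_mul (x u τ, u τ) (x₀, u τ)
      rw [Prod.dist_eq] at hlip
      simp only [dist_self] at hlip
      rw [max_eq_left dist_nonneg, dist_eq_norm] at hlip
      calc ‖φ (x u τ) (u τ)‖
          ≤ ‖φ (x u τ) (u τ) - φ x₀ (u τ)‖ + ‖φ x₀ (u τ)‖ := by
            simpa using norm_add_le (φ (x u τ) (u τ) - φ x₀ (u τ)) (φ x₀ (u τ))
        _ ≤ (L:ℝ) * ‖x u τ - x₀‖ + M := by
            have h2 := hM (u τ) (hu'.2 τ hτ')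
            have h3 : ‖φ (x u τ) (u τ) - φ x₀ (u τ)‖ ≤ (L:ℝ) * ‖x u τ - x₀‖ := by
              rw [← dist_eq_norm, ← dist_eq_norm]; exact hlip
            linarith
    have := aux_gronwall (y₂ := fun _ : ℝ => x₀)
      (g₂ := fun _ : ℝ => (0 : EuclideanSpace ℝ (Fin n)))
      (hGcont u hu) continuousOn_const (hxsol u hu).1 continuousOn_const
      (hxsol u hu).2 (fun s' _ => by simp) hb hT.le s hs
    refine this.trans ?_
    exact aux_gb_mono hM0 L.coe_nonneg (by linarith [hs.2, hs.1])
  -- Grönwall separation estimate between trajectories of nearby controls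
  have hsep : ∀ ub ∈ Kb, ∀ vb ∈ Kb, ∀ s ∈ Icc (0:ℝ) T,
      ‖x (ex ub) s - x (ex vb) s‖ ≤ dist ub vb * B₁ := by
    intro ub hub vb hvb s hs
    have hu := hexK ub hub
    have hv := hexK vb hvb
    set d : ℝ := dist ub vb with hddef
    have hd0 : (0:ℝ) ≤ d := dist_nonneg
    have hctrl : ∀ τ, dist (ex ub τ) (ex vb τ) ≤ d :=
      fun τ => BoundedContinuousFunction.dist_coe_le_dist _
    have hb : ∀ τ ∈ Ico (0:ℝ) T, ‖φ (x (ex ub) τ) (ex ub τ) - φ (x (ex vb) τ) (ex vb τ)‖ ≤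
        (L:ℝ) * ‖x (ex ub) τ - x (ex vb) τ‖ + (L:ℝ) * d := by
      intro τ hτ
      have hlip := hφ.dist_le_mul (x (ex ub) τ, ex ub τ) (x (ex vb) τ, ex vb τ)
      rw [Prod.dist_eq] at hlip
      have hmax : max (dist (x (ex ub) τ) (x (ex vb) τ)) (dist (ex ub τ) (ex vb τ)) ≤
          dist (x (ex ub) τ) (x (ex vb) τ) + d :=
        max_le (le_add_of_nonneg_right hd0) ((hctrl τ).trans (le_add_of_nonneg_left dist_nonneg))
      rw [← dist_eq_norm, ← dist_eq_norm]
      calc dist (φ (x (ex ub) τ) (ex ub τ)) (φ (x (ex vb) τ) (ex vb τ))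
          ≤ (L:ℝ) * (dist (x (ex ub) τ) (x (ex vb) τ) + d) := by
            exact hlip.trans (mul_le_mul_of_nonneg_left hmax L.coe_nonneg)
        _ = (L:ℝ) * dist (x (ex ub) τ) (x (ex vb) τ) + (L:ℝ) * d := by ring
    have := aux_gronwall (hGcont _ hu) (hGcont _ hv) (hxsol _ hu).1 (hxsol _ hv).1
      (hxsol _ hu).2 (hxsol _ hv).2 hb hT.le s hs
    refine this.trans ?_
    have h1 : gronwallBound 0 (L:ℝ) ((L:ℝ) * d) (s - 0) ≤ gronwallBound 0 (L:ℝ) ((L:ℝ) * d) T :=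
      aux_gb_mono (mul_nonneg L.coe_nonneg hd0) L.coe_nonneg (by linarith [hs.2])
    refine h1.trans ?_
    rw [show (L:ℝ) * d = d * (L:ℝ) by ring, aux_gb_smul]
  -- the evaluation-and-integral map
  set Φ : (BoundedContinuousFunction (↥(Icc (0:ℝ) T)) (EuclideanSpace ℝ (Fin r))) → EuclideanSpace ℝ (Fin n) × ℝ × EuclideanSpace ℝ (Fin r) :=
    fun ub => (x (ex ub) t, ∫ τ in (0:ℝ)..t, f (x (ex ub) τ) (ex ub τ), ex ub t) with hΦdef
  have hsub : uIcc (0:ℝ) t ⊆ Icc (0:ℝ) T := by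
    rw [uIcc_of_le ht.1]
    exact Icc_subset_Icc le_rfl ht.2
  -- identification of `D(t)` as the image of `Kb` under `Φ`
  have himg : {p : EuclideanSpace ℝ (Fin n) × ℝ × EuclideanSpace ℝ (Fin r) |
      ∃ u ∈ 𝒦, p = (x u t, ∫ τ in (0:ℝ)..t, f (x u τ) (u τ), u t)} = Φ '' Kb := by
    ext p
    constructor
    · rintro ⟨u, hu, rfl⟩
      have hu' := hu; rw [h𝒦] at hu'
      set ub : BoundedContinuousFunction (↥(Icc (0:ℝ) T)) (EuclideanSpace ℝ (Fin r)) :=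
        BoundedContinuousFunction.mkOfCompact ⟨fun s => u s, (hucont u hu).restrict⟩ with hubdef
      have hubapp : ∀ s : Icc (0:ℝ) T, ub s = u s := fun s => rfl
      have hubK : ub ∈ Kb := by
        constructor
        · intro a b
          have := hu'.1.dist_le_mul a a.2 b b.2
          rw [Real.coe_toNNReal C hC.le] at this
          rw [hubapp, hubapp, Subtype.dist_eq]
          exact this
        · intro s
          rw [hubapp]
          exact hu'.2 s s.2
      have hexeq : ∀ s ∈ Icc (0:ℝ) T, ex ub s = u s := by
        intro s hs
        rw [hex_eq ub s hs hs, hubapp]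
      have hxeq : ∀ s ∈ Icc (0:ℝ) T, x (ex ub) s = x u s := by
        apply hxuniq u hu (x (ex ub)) (hxsol _ (hexK ub hubK)).1
        intro s' hs'
        rw [(hxsol _ (hexK ub hubK)).2 s' hs']
        congr 1
        apply intervalIntegral.integral_congr
        intro τ hτ
        have hτ' : τ ∈ Icc (0:ℝ) T := by
          rw [uIcc_of_le hs'.1] at hτ
          exact ⟨hτ.1, hτ.2.trans hs'.2⟩
        simp only [hexeq τ hτ']
      have hint_eq : (∫ τ in (0:ℝ)..t, f (x (ex ub) τ) (ex ub τ)) =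
          ∫ τ in (0:ℝ)..t, f (x u τ) (u τ) := by
        apply intervalIntegral.integral_congr
        intro τ hτ
        have hτ' : τ ∈ Icc (0:ℝ) T := hsub hτ
        simp only [hexeq τ hτ', hxeq τ hτ']
      refine ⟨ub, hubK, ?_⟩
      show Φ ub = _
      rw [hΦdef]
      simp only
      rw [hxeq t ht, hexeq t ht, hint_eq]
    · rintro ⟨ub, hub, rfl⟩
      exact ⟨ex ub, hexK ub hub, rfl⟩
  rw [himg]
  -- compactness of `Kb` by Arzelà–Ascoli
  have hKbcomp : IsCompact Kb := by
    apply BoundedContinuousFunction.arzela_ascoli₂ U hUcomp Kb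
    · have h1 : IsClosed {ub : BoundedContinuousFunction (↥(Icc (0:ℝ) T)) (EuclideanSpace ℝ (Fin r)) |
          ∀ a b : Icc (0:ℝ) T, dist (ub a) (ub b) ≤ C * dist a b} := by
        simp only [setOf_forall]
        refine isClosed_iInter fun a => isClosed_iInter fun b => ?_
        exact isClosed_le
          (Continuous.dist (continuous_eval_const a)
            (continuous_eval_const b)) continuous_const
      have h2 : IsClosed {ub : BoundedContinuousFunction (↥(Icc (0:ℝ) T)) (EuclideanSpace ℝ (Fin r)) | ∀ s, ub s ∈ U} := by
        simp only [setOf_forall]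
        exact isClosed_iInter fun s =>
          hUcomp.isClosed.preimage (continuous_eval_const s)
      rw [hKbdef, setOf_and]
      exact h1.inter h2
    · intro g s hg
      exact hg.2 s
    · apply Metric.equicontinuous_of_continuity_modulus (fun d => C * d)
      · have : Filter.Tendsto (fun d : ℝ => C * d) (nhds 0) (nhds (C * 0)) :=
          (continuous_const.mul continuous_id).tendsto 0
        simpa using this
      · intro a b i
        exact i.2.1 a b
  -- continuity of `Φ` on `Kb`
  have hΦcont : ContinuousOn Φ Kb := by
    rw [Metric.continuousOn_iff]
    intro ub hub ε hε
    set S : Set (EuclideanSpace ℝ (Fin n) × EuclideanSpace ℝ (Fin r)) := (Metric.closedBall x₀ R) ×ˢ U with hSdef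
    have hScomp : IsCompact S := (isCompact_closedBall x₀ R).prod hUcomp
    have hfu := hScomp.uniformContinuousOn_of_continuous hf.continuousOn
    rw [Metric.uniformContinuousOn_iff] at hfu
    have hε₂ : (0:ℝ) < ε / (T + 1) := div_pos hε (by linarith)
    obtain ⟨δf, hδf, hδfspec⟩ := hfu (ε / (T + 1)) hε₂
    refine ⟨min (ε / (B₁ + 1)) (δf / (B₁ + 1)), by positivity, ?_⟩
    intro vb hvb hdist
    set d : ℝ := dist vb ub with hddef
    have hd0 : (0:ℝ) ≤ d := dist_nonneg
    have hdB₁ε : d * (B₁ + 1) < ε := by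
      have h1 : d < ε / (B₁ + 1) := lt_of_lt_of_le hdist (min_le_left _ _)
      calc d * (B₁ + 1) < (ε / (B₁ + 1)) * (B₁ + 1) :=
            mul_lt_mul_of_pos_right h1 (by positivity)
        _ = ε := div_mul_cancel₀ ε (by positivity)
    have hdB₁δ : d * (B₁ + 1) < δf := by
      have h1 : d < δf / (B₁ + 1) := lt_of_lt_of_le hdist (min_le_right _ _)
      calc d * (B₁ + 1) < (δf / (B₁ + 1)) * (B₁ + 1) :=
            mul_lt_mul_of_pos_right h1 (by positivity)
        _ = δf := div_mul_cancel₀ δf (by positivity)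
    have hu := hexK ub hub
    have hv := hexK vb hvb
    have hu' := hu; rw [h𝒦] at hu'
    have hv' := hv; rw [h𝒦] at hv'
    have hctrl : ∀ s, dist (ex vb s) (ex ub s) ≤ d :=
      fun s => BoundedContinuousFunction.dist_coe_le_dist _
    have htraj : ∀ s ∈ Icc (0:ℝ) T, ‖x (ex vb) s - x (ex ub) s‖ ≤ d * B₁ :=
      hsep vb hvb ub hub
    -- the three components
    have c1 : dist (x (ex vb) t) (x (ex ub) t) < ε := by
      rw [dist_eq_norm]
      have := htraj t ht
      nlinarith
    have c3 : dist (ex vb t) (ex ub t) < ε := by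
      have := hctrl t
      nlinarith
    have c2 : dist (∫ τ in (0:ℝ)..t, f (x (ex vb) τ) (ex vb τ))
        (∫ τ in (0:ℝ)..t, f (x (ex ub) τ) (ex ub τ)) < ε := by
      have hintv : IntervalIntegrable (fun τ => f (x (ex vb) τ) (ex vb τ)) volume 0 t := by
        apply ContinuousOn.intervalIntegrable
        exact hf.comp_continuousOn
          ((((hxsol _ hv).1.mono hsub)).prodMk ((hucont _ hv).mono hsub))
      have hintu : IntervalIntegrable (fun τ => f (x (ex ub) τ) (ex ub τ)) volume 0 t := by
        apply ContinuousOn.intervalIntegrable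
        exact hf.comp_continuousOn
          ((((hxsol _ hu).1.mono hsub)).prodMk ((hucont _ hu).mono hsub))
      rw [dist_eq_norm, ← intervalIntegral.integral_sub hintv hintu]
      have hnorm : ‖∫ τ in (0:ℝ)..t,
          (f (x (ex vb) τ) (ex vb τ) - f (x (ex ub) τ) (ex ub τ))‖ ≤ (ε / (T + 1)) * |t - 0| := by
        apply intervalIntegral.norm_integral_le_of_norm_le_const
        intro τ hτ
        have hτ' : τ ∈ Icc (0:ℝ) T := by
          rw [uIoc_of_le ht.1] at hτ
          exact ⟨hτ.1.le, hτ.2.trans ht.2⟩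
        have hmem_v : (x (ex vb) τ, ex vb τ) ∈ S := by
          constructor
          · rw [Metric.mem_closedBall, dist_eq_norm]
            exact hball _ hv τ hτ'
          · exact hv'.2 τ hτ'
        have hmem_u : (x (ex ub) τ, ex ub τ) ∈ S := by
          constructor
          · rw [Metric.mem_closedBall, dist_eq_norm]
            exact hball _ hu τ hτ'
          · exact hu'.2 τ hτ'
        have hdd : dist ((x (ex vb) τ, ex vb τ) : EuclideanSpace ℝ (Fin n) × EuclideanSpace ℝ (Fin r))
            (x (ex ub) τ, ex ub τ) < δf := by
          rw [Prod.dist_eq]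
          apply max_lt
          · rw [dist_eq_norm]
            have := htraj τ hτ'
            nlinarith
          · have := hctrl τ
            nlinarith
        have := hδfspec _ hmem_v _ hmem_u hdd
        rw [Real.dist_eq] at this
        rw [Real.norm_eq_abs]
        exact this.le
      refine hnorm.trans_lt ?_
      rw [sub_zero, abs_of_nonneg ht.1]
      calc (ε / (T + 1)) * t ≤ (ε / (T + 1)) * T := by
            apply mul_le_mul_of_nonneg_left ht.2 hε₂.le
        _ < ε := by
            rw [div_mul_eq_mul_div, div_lt_iff₀ (by linarith)]
            nlinarith
    rw [hΦdef]
    simp only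
    rw [Prod.dist_eq]
    apply max_lt c1
    rw [Prod.dist_eq]
    exact max_lt c2 c3
  exact hKbcomp.image_of_continuousOn hΦcont
end

section
/- Let T > 0, let U ⊂ ℝ^r be a convex compact set, and let φ : ℝ^n × ℝ^r → ℝ^n be globally Lipschitz in both variables. For a control u : [0,T] → U let x_u denote the unique continuous solution of x_u(t) = x₀ + ∫₀ᵗ φ(x_u(τ), u(τ)) dτ. If measurable controls u_k converge to a control u in the L¹ metric, i.e. ∫₀ᵀ ‖u_k(τ) − u(τ)‖ dτ → 0, then the trajectories x_{u_k} converge uniformly on [0,T] to the trajectory x_u. -/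
open MeasureTheory Set Filter

lemma gron_integral {f : ℝ → ℝ} (hf : Continuous f) {b δ K : ℝ} (hδ : 0 ≤ δ) (hK : 0 ≤ K)
    (h : ∀ t ∈ Icc (0:ℝ) b, f t ≤ δ + K * ∫ τ in (0:ℝ)..t, f τ) :
    ∀ t ∈ Icc (0:ℝ) b, f t ≤ δ * Real.exp (K * b) := by
  set F : ℝ → ℝ := fun t => ∫ τ in (0:ℝ)..t, f τ with hF
  have hFd : ∀ x : ℝ, HasDerivAt F (f x) x := fun x =>
    intervalIntegral.integral_hasDerivAt_right (hf.intervalIntegrable 0 x)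
      (hf.stronglyMeasurableAtFilter _ _) hf.continuousAt
  have hFc : Continuous F := by
    rw [continuous_iff_continuousAt]; exact fun x => (hFd x).continuousAt
  have key : ∀ t ∈ Icc (0:ℝ) b, F t ≤ gronwallBound 0 K δ (t - 0) := by
    apply le_gronwallBound_of_liminf_deriv_right_le (f' := f) hFc.continuousOn
    · intro x _ r hr
      have := ((hFd x).hasDerivWithinAt (s := Ici x)).liminf_right_slope_le hr
      refine this.mono fun z hz => ?_
      rwa [slope_def_field, div_eq_inv_mul] at hz
    · simp [hF]
    · intro x hx
      have := h x ⟨hx.1, hx.2.le⟩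
      linarith
  intro t ht
  have hFle : F t ≤ gronwallBound 0 K δ (t - 0) := key t ht
  rcases eq_or_ne K 0 with hK0 | hK0
  · subst hK0
    have := h t ht
    simpa using this.trans (by simp)
  · have hgb : gronwallBound 0 K δ (t - 0) = δ / K * (Real.exp (K * t) - 1) := by
      rw [gronwallBound_of_K_ne_0 hK0]; simp
    have h1 : f t ≤ δ + K * F t := h t ht
    have h2 : δ + K * (δ / K * (Real.exp (K * t) - 1)) = δ * Real.exp (K * t) := by
      field_simp; ring
    have hKpos : 0 < K := lt_of_le_of_ne hK (Ne.symm hK0)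
    have : f t ≤ δ * Real.exp (K * t) := by
      calc f t ≤ δ + K * F t := h1
        _ ≤ δ + K * (δ / K * (Real.exp (K * t) - 1)) := by
            have := hFle; rw [hgb] at this; nlinarith
        _ = δ * Real.exp (K * t) := h2
    refine this.trans ?_
    have : Real.exp (K * t) ≤ Real.exp (K * b) :=
      Real.exp_le_exp.2 (by nlinarith [ht.2])
    nlinarith [Real.exp_pos (K * t)]

/-- For a globally Lipschitz right-hand side `φ`, if measurable controls
`u_k : [0,T] → U` converge to a control `u` in the L¹ metric, i.e.
`∫₀ᵀ ‖u_k(τ) − u(τ)‖ dτ → 0`, then the corresponding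
trajectories `x_{u_k}` (the unique continuous solutions of
`x(t) = x₀ + ∫₀ᵗ φ(x(τ), u(τ)) dτ`) converge uniformly on `[0,T]` to `x_u`. -/
theorem statement5 {n r : ℕ} (T : ℝ) (hT : 0 < T)
    (U : Set (EuclideanSpace ℝ (Fin r))) (hUconv : Convex ℝ U) (hUcomp : IsCompact U)
    (φ : EuclideanSpace ℝ (Fin n) → EuclideanSpace ℝ (Fin r) → EuclideanSpace ℝ (Fin n))
    (L : NNReal) (hφ : LipschitzWith L (Function.uncurry φ))
    (x₀ : EuclideanSpace ℝ (Fin n))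
    (isControl : (ℝ → EuclideanSpace ℝ (Fin r)) → Prop)
    (hisControl : ∀ v, isControl v ↔ Measurable v ∧ ∀ τ ∈ Icc 0 T, v τ ∈ U)
    (x : (ℝ → EuclideanSpace ℝ (Fin r)) → ℝ → EuclideanSpace ℝ (Fin n))
    (hxsol : ∀ v, isControl v → ContinuousOn (x v) (Icc 0 T) ∧
      ∀ t ∈ Icc 0 T, x v t = x₀ + ∫ τ in (0:ℝ)..t, φ (x v τ) (v τ))
    (hxuniq : ∀ v, isControl v → ∀ y : ℝ → EuclideanSpace ℝ (Fin n),
      ContinuousOn y (Icc 0 T) →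
      (∀ t ∈ Icc 0 T, y t = x₀ + ∫ τ in (0:ℝ)..t, φ (y τ) (v τ)) →
      ∀ t ∈ Icc 0 T, y t = x v t)
    (u : ℕ → ℝ → EuclideanSpace ℝ (Fin r)) (ulim : ℝ → EuclideanSpace ℝ (Fin r))
    (hu : ∀ k, isControl (u k)) (hulim : isControl ulim)
    (huconv : Tendsto (fun k => ∫ τ in (0:ℝ)..T, ‖u k τ - ulim τ‖) atTop (nhds 0)) :
    TendstoUniformlyOn (fun k => x (u k)) (x ulim) atTop (Icc 0 T) := by
  obtain ⟨MU, hMU⟩ : ∃ C, ∀ z ∈ U, ‖z‖ ≤ C := isBounded_iff_forall_norm_le.1 hUcomp.isBounded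
  -- Lipschitz estimate in two variables
  have hdiff : ∀ a c (b d : EuclideanSpace ℝ (Fin r)),
      ‖φ a b - φ c d‖ ≤ (L:ℝ) * (‖a - c‖ + ‖b - d‖) := by
    intro a c b d
    have h1 := hφ.dist_le_mul (a, b) (c, d)
    rw [Function.uncurry_apply_pair, Function.uncurry_apply_pair, Prod.dist_eq] at h1
    rw [← dist_eq_norm]
    refine h1.trans ?_
    have : max (dist a c) (dist b d) ≤ ‖a - c‖ + ‖b - d‖ := by
      rw [dist_eq_norm, dist_eq_norm]
      exact max_le (le_add_of_nonneg_right (norm_nonneg _))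
        (le_add_of_nonneg_left (norm_nonneg _))
    exact mul_le_mul_of_nonneg_left this L.2
  -- clamp
  set c : ℝ → ℝ := fun t => max 0 (min t T) with hc
  have hc_cont : Continuous c := (continuous_const.max (continuous_id.min continuous_const))
  have hc_mem : ∀ t, c t ∈ Icc (0:ℝ) T := fun t =>
    ⟨le_max_left _ _, max_le hT.le (min_le_right _ _)⟩
  have hc_eq : ∀ t ∈ Icc (0:ℝ) T, c t = t := by
    intro t ht
    simp [hc, min_eq_left ht.2, max_eq_right ht.1]
  -- extended trajectories, with properties
  have main : ∀ v, isControl v → ∃ X : ℝ → EuclideanSpace ℝ (Fin n),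
      Continuous X ∧ (∀ t ∈ Icc (0:ℝ) T, X t = x v t) ∧
      (∀ t ∈ Icc (0:ℝ) T, X t = x₀ + ∫ τ in (0:ℝ)..t, φ (X τ) (v τ)) ∧
      IntervalIntegrable (fun τ => φ (X τ) (v τ)) volume 0 T := by
    intro v hv
    obtain ⟨hvm, hvU⟩ := (hisControl v).1 hv
    obtain ⟨hxc, hxeq⟩ := hxsol v hv
    refine ⟨fun t => x v (c t), hxc.comp_continuous hc_cont hc_mem, ?_, ?_, ?_⟩
    · intro t ht; show x v (c t) = x v t; rw [hc_eq t ht]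
    · intro t ht
      have hXeq : ∀ τ ∈ Icc (0:ℝ) t, x v (c τ) = x v τ := fun τ hτ => by
        rw [hc_eq τ ⟨hτ.1, hτ.2.trans ht.2⟩]
      show x v (c t) = _
      rw [hc_eq t ht, hxeq t ht]
      congr 1
      refine intervalIntegral.integral_congr fun τ hτ => ?_
      rw [uIcc_of_le ht.1] at hτ
      show φ (x v τ) (v τ) = φ (x v (c τ)) (v τ)
      rw [hXeq τ hτ]
    · -- integrability on [0,T]
      have hXc : Continuous fun t => x v (c t) := hxc.comp_continuous hc_cont hc_mem
      obtain ⟨MX, hMX⟩ : ∃ C, ∀ t, ‖x v (c t)‖ ≤ C := by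
        obtain ⟨C, hC⟩ := isBounded_iff_forall_norm_le.1
          ((isCompact_Icc.image_of_continuousOn hxc).isBounded)
        exact ⟨C, fun t => hC _ ⟨c t, hc_mem t, rfl⟩⟩
      rw [intervalIntegrable_iff_integrableOn_Ioc_of_le hT.le]
      have hmeas : AEStronglyMeasurable (fun τ => φ (x v (c τ)) (v τ))
          (volume.restrict (Ioc 0 T)) :=
        (hφ.continuous.measurable.comp (hXc.measurable.prodMk hvm)).aestronglyMeasurable
      refine Integrable.mono' (g := fun _ => ‖φ 0 0‖ + (L:ℝ) * (MX + MU))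
        (integrableOn_const measure_Ioc_lt_top.ne) hmeas ?_
      filter_upwards [ae_restrict_mem measurableSet_Ioc] with τ hτ
      have hτ' : τ ∈ Icc (0:ℝ) T := ⟨hτ.1.le, hτ.2⟩
      have hlip := hdiff (x v (c τ)) 0 (v τ) 0
      rw [sub_zero, sub_zero] at hlip
      have htri : ‖φ (x v (c τ)) (v τ)‖ - ‖φ 0 0‖ ≤ ‖φ (x v (c τ)) (v τ) - φ 0 0‖ :=
        norm_sub_norm_le _ _
      have hb : ‖φ (x v (c τ)) (v τ)‖ ≤ ‖φ 0 0‖ + (L:ℝ) * (‖x v (c τ)‖ + ‖v τ‖) := by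
        linarith
      refine hb.trans ?_
      have h1 := hMX τ
      have h2 := hMU _ (hvU τ hτ')
      have h3 := mul_le_mul_of_nonneg_left (add_le_add h1 h2) L.2
      show _ ≤ ‖φ 0 0‖ + (L:ℝ) * (MX + MU)
      exact add_le_add le_rfl h3
  obtain ⟨Xl, hXlc, hXlag, hXleq, hXlint⟩ := main ulim hulim
  choose Xk hXkc hXkag hXkeq hXkint using fun k => main (u k) (hu k)
  obtain ⟨hulm, hulU⟩ := (hisControl ulim).1 hulim
  -- integrability of control differences
  have hukm : ∀ k, Measurable (u k) := fun k => ((hisControl _).1 (hu k)).1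
  have hukU : ∀ k, ∀ τ ∈ Icc (0:ℝ) T, u k τ ∈ U := fun k => ((hisControl _).1 (hu k)).2
  have hgint : ∀ k, IntervalIntegrable (fun τ => ‖u k τ - ulim τ‖) volume 0 T := by
    intro k
    rw [intervalIntegrable_iff_integrableOn_Ioc_of_le hT.le]
    refine Integrable.mono' (g := fun _ => MU + MU)
      (integrableOn_const measure_Ioc_lt_top.ne)
      (((hukm k).sub hulm).norm.aestronglyMeasurable) ?_
    filter_upwards [ae_restrict_mem measurableSet_Ioc] with τ hτ
    have hτ' : τ ∈ Icc (0:ℝ) T := ⟨hτ.1.le, hτ.2⟩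
    calc ‖‖u k τ - ulim τ‖‖ = ‖u k τ - ulim τ‖ := norm_norm _
      _ ≤ ‖u k τ‖ + ‖ulim τ‖ := norm_sub_le _ _
      _ ≤ MU + MU := add_le_add (hMU _ (hukU k τ hτ')) (hMU _ (hulU τ hτ'))
  set ε : ℕ → ℝ := fun k => ∫ τ in (0:ℝ)..T, ‖u k τ - ulim τ‖ with hε
  have hεnn : ∀ k, 0 ≤ ε k := fun k =>
    intervalIntegral.integral_nonneg hT.le (fun τ _ => norm_nonneg _)
  set f : ℕ → ℝ → ℝ := fun k t => ‖Xk k t - Xl t‖ with hf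
  have hfc : ∀ k, Continuous (f k) := fun k => ((hXkc k).sub hXlc).norm
  -- key estimate
  have key : ∀ k, ∀ t ∈ Icc (0:ℝ) T,
      f k t ≤ (L:ℝ) * ε k + (L:ℝ) * ∫ τ in (0:ℝ)..t, f k τ := by
    intro k t ht
    have h0t : (0:ℝ) ≤ t := ht.1
    have hki : IntervalIntegrable (fun τ => φ (Xk k τ) (u k τ)) volume 0 t :=
      (hXkint k).mono_set (by rw [uIcc_of_le h0t, uIcc_of_le hT.le]; exact Icc_subset_Icc le_rfl ht.2)
    have hli : IntervalIntegrable (fun τ => φ (Xl τ) (ulim τ)) volume 0 t :=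
      hXlint.mono_set (by rw [uIcc_of_le h0t, uIcc_of_le hT.le]; exact Icc_subset_Icc le_rfl ht.2)
    have hgi : IntervalIntegrable (fun τ => ‖u k τ - ulim τ‖) volume 0 t :=
      (hgint k).mono_set (by rw [uIcc_of_le h0t, uIcc_of_le hT.le]; exact Icc_subset_Icc le_rfl ht.2)
    have hsub : Xk k t - Xl t = ∫ τ in (0:ℝ)..t, (φ (Xk k τ) (u k τ) - φ (Xl τ) (ulim τ)) := by
      rw [hXkeq k t ht, hXleq t ht, intervalIntegral.integral_sub hki hli]
      abel
    calc f k t = ‖∫ τ in (0:ℝ)..t, (φ (Xk k τ) (u k τ) - φ (Xl τ) (ulim τ))‖ := by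
          show ‖Xk k t - Xl t‖ = _; rw [hsub]
      _ ≤ ∫ τ in (0:ℝ)..t, ‖φ (Xk k τ) (u k τ) - φ (Xl τ) (ulim τ)‖ :=
          intervalIntegral.norm_integral_le_integral_norm h0t
      _ ≤ ∫ τ in (0:ℝ)..t, ((L:ℝ) * f k τ + (L:ℝ) * ‖u k τ - ulim τ‖) := by
          refine intervalIntegral.integral_mono_on h0t (hki.sub hli).norm
            ((((hfc k).intervalIntegrable 0 t).const_mul _).add (hgi.const_mul _)) ?_
          intro τ _
          have := hdiff (Xk k τ) (Xl τ) (u k τ) (ulim τ)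
          rw [hf]
          dsimp only
          linarith [this, mul_add (L:ℝ) ‖Xk k τ - Xl τ‖ ‖u k τ - ulim τ‖]
      _ = (L:ℝ) * (∫ τ in (0:ℝ)..t, f k τ)
            + (L:ℝ) * ∫ τ in (0:ℝ)..t, ‖u k τ - ulim τ‖ := by
          rw [intervalIntegral.integral_add (((hfc k).intervalIntegrable 0 t).const_mul _)
            (hgi.const_mul _)]
          congr 1 <;> exact intervalIntegral.integral_const_mul _ _
      _ ≤ (L:ℝ) * ε k + (L:ℝ) * ∫ τ in (0:ℝ)..t, f k τ := by
          have h1 : (∫ τ in (0:ℝ)..t, ‖u k τ - ulim τ‖) ≤ ε k := by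
            refine intervalIntegral.integral_mono_interval le_rfl h0t ht.2 ?_ (hgint k)
            filter_upwards with τ using norm_nonneg _
          have h2 := mul_le_mul_of_nonneg_left h1 L.2
          calc (L:ℝ) * (∫ τ in (0:ℝ)..t, f k τ) + (L:ℝ) * ∫ τ in (0:ℝ)..t, ‖u k τ - ulim τ‖
              ≤ (L:ℝ) * (∫ τ in (0:ℝ)..t, f k τ) + (L:ℝ) * ε k := add_le_add le_rfl h2
            _ = (L:ℝ) * ε k + (L:ℝ) * ∫ τ in (0:ℝ)..t, f k τ := add_comm _ _
  have bound : ∀ k, ∀ t ∈ Icc (0:ℝ) T, f k t ≤ (L:ℝ) * ε k * Real.exp ((L:ℝ) * T) := by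
    intro k
    exact gron_integral (hfc k) (mul_nonneg L.2 (hεnn k)) L.2 (key k)
  -- conclude
  rw [Metric.tendstoUniformlyOn_iff]
  intro e he
  have hlim : Tendsto (fun k => (L:ℝ) * ε k * Real.exp ((L:ℝ) * T)) atTop (nhds 0) := by
    have := (huconv.const_mul (L:ℝ)).mul_const (Real.exp ((L:ℝ) * T))
    simpa using this
  filter_upwards [hlim.eventually_lt_const he] with k hk t ht
  have h1 : dist (x ulim t) (x (u k) t) = f k t := by
    rw [hf, ← hXkag k t ht, ← hXlag t ht, dist_eq_norm, norm_sub_rev]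
  rw [h1]
  exact lt_of_le_of_lt (bound k t ht) hk
end
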